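/- Let X be a geodesic metric space, x ∈ X a point, and β a (q,Q)-quasi-geodesic segment from z to w. If y is a closest point of (the image of) β to x, then the concatenation of a geodesic segment [x,y] with the portion of β from y to z is a (3q,Q)-quasi-geodesic. -/

import Mathlib

open Metric Set Filter

/-- `α` is a (q,Q)-quasi-geodesic on the parameter set `s`. -/
def QGeo {X : Type*} [MetricSpace X] (q Q : ℝ) (s : Set ℝ) (α : ℝ → X) : Prop :=
  ∀ ⦃t u : ℝ⦄, t ∈ s → u ∈ s →
    |t - u| / q - Q ≤ dist (α t) (α u) ∧ dist (α t) (α u) ≤ q * |t - u| + Q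

/-- A geodesic metric space: any two points are joined by a unit-speed geodesic. -/
def GeodesicSpace (X : Type*) [MetricSpace X] : Prop :=
  ∀ x y : X, ∃ g : ℝ → X, g 0 = x ∧ g (dist x y) = y ∧
    ∀ s t : ℝ, s ∈ Set.Icc 0 (dist x y) → t ∈ Set.Icc 0 (dist x y) →
      dist (g s) (g t) = |s - t|

/-- A geodesic ray based at `o`: unit-speed isometric embedding of `[0,∞)` with value `o` at `0`. -/
def GeodesicRay {X : Type*} [MetricSpace X] (o : X) (a : ℝ → X) : Prop :=
  a 0 = o ∧ ∀ s t : ℝ, 0 ≤ s → 0 ≤ t → dist (a s) (a t) = |s - t|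

/-- The first time the ray `α` leaves the open ball of radius `r` about `o`. -/
noncomputable def exitTime {X : Type*} [MetricSpace X] (o : X) (α : ℝ → X) (r : ℝ) : ℝ :=
  sInf {t : ℝ | 0 ≤ t ∧ r ≤ dist o (α t)}

/-- concatenating a geodesic `[x,y]` (y a closest point of the quasi-geodesic
segment β to x) with the portion of β from y back to its initial point z = β a
yields a (3q,Q)-quasi-geodesic. -/
theorem stmt2 {X : Type*} [MetricSpace X] (hX : GeodesicSpace X)
    (q Q : ℝ) (hq : 1 ≤ q) (hQ : 0 ≤ Q)
    (a b : ℝ) (hab : a ≤ b) (β : ℝ → X) (hβ : QGeo q Q (Set.Icc a b) β)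
    (x : X) (c : ℝ) (hc : c ∈ Set.Icc a b)
    (hclosest : ∀ t ∈ Set.Icc a b, dist x (β c) ≤ dist x (β t))
    (g : ℝ → X) (hg0 : g 0 = x) (hgd : g (dist x (β c)) = β c)
    (hgiso : ∀ s t : ℝ, s ∈ Set.Icc 0 (dist x (β c)) → t ∈ Set.Icc 0 (dist x (β c)) →
      dist (g s) (g t) = |s - t|) :
    QGeo (3*q) Q (Set.Icc 0 (dist x (β c) + (c - a)))
      (fun t => if t ≤ dist x (β c) then g t else β (c - (t - dist x (β c)))) := by
  have hd0 : 0 ≤ dist x (β c) := dist_nonneg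
  set d := dist x (β c) with hdd
  set G : ℝ → X := fun t => if t ≤ d then g t else β (c - (t - d)) with hG
  have hq0 : 0 < q := lt_of_lt_of_le one_pos hq
  have h3q : 0 < 3 * q := by linarith
  have key : ∀ ⦃t u : ℝ⦄, t ∈ Set.Icc 0 (d + (c - a)) → u ∈ Set.Icc 0 (d + (c - a)) →
      t ≤ u → |t - u| / (3 * q) - Q ≤ dist (G t) (G u) ∧
        dist (G t) (G u) ≤ 3 * q * |t - u| + Q := by
    intro t u ht hu htu
    obtain ⟨ht0, ht1⟩ := ht
    obtain ⟨hu0, hu1⟩ := hu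
    have habs : |t - u| = u - t := by
      rw [abs_sub_comm]; exact abs_of_nonneg (by linarith)
    rw [habs]
    by_cases hud : u ≤ d
    · -- both on the geodesic
      have htd : t ≤ d := le_trans htu hud
      have hdist : dist (G t) (G u) = u - t := by
        simp only [hG, if_pos htd, if_pos hud]
        rw [hgiso t u ⟨ht0, htd⟩ ⟨hu0, hud⟩, abs_sub_comm,
          abs_of_nonneg (by linarith : (0:ℝ) ≤ u - t)]
      rw [hdist]
      constructor
      · have h1 : (u - t) / (3 * q) ≤ u - t := by
          rw [div_le_iff₀ h3q]; nlinarith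
        linarith
      · nlinarith
    · push_neg at hud
      by_cases htd : t ≤ d
      · -- mixed case
        have hGt : G t = g t := by simp only [hG, if_pos htd]
        have hGu : G u = β (c - (u - d)) := by
          simp only [hG, if_neg (not_le.mpr hud)]
        set u' := c - (u - d) with hu'
        have hu'mem : u' ∈ Set.Icc a b := ⟨by simp only [hu']; linarith,
          by simp only [hu']; linarith [hc.2]⟩
        have hxt : dist x (g t) = t := by
          rw [← hg0, hgiso 0 t ⟨le_refl 0, hd0⟩ ⟨ht0, htd⟩]
          rw [abs_sub_comm, sub_zero, abs_of_nonneg ht0]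
        have htc : dist (g t) (β c) = d - t := by
          rw [← hgd, hgiso t d ⟨ht0, htd⟩ ⟨hd0, le_refl d⟩,
            abs_of_nonpos (by linarith : t - d ≤ 0)]
          ring
        have hβcu := hβ hc hu'mem
        have hcu' : |c - u'| = u - d := by
          rw [hu', abs_of_nonneg (by linarith)]; ring
        rw [hcu'] at hβcu
        have hclo : d ≤ dist x (β u') := hclosest u' hu'mem
        have tri1 : dist x (β u') ≤ dist x (g t) + dist (g t) (β u') :=
          dist_triangle _ _ _
        have tri2 : dist (β c) (β u') ≤ dist (β c) (g t) + dist (g t) (β u') :=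
          dist_triangle _ _ _
        have tri3 : dist (g t) (β u') ≤ dist (g t) (β c) + dist (β c) (β u') :=
          dist_triangle _ _ _
        rw [dist_comm (β c) (g t)] at tri2
        rw [hGt, hGu]
        set D := dist (g t) (β u') with hD
        have hDA : d - t ≤ D := by linarith [hxt, hclo, tri1]
        have hDB : (u - d) / q - Q ≤ 2 * D := by
          have := hβcu.1
          linarith [htc, tri2]
        have hBq : u - d ≤ q * (2 * D + Q) := by
          have h := hDB
          rw [div_sub' (ne_of_gt hq0), div_le_iff₀ hq0] at h
          nlinarith
        constructor
        · rw [div_sub' (ne_of_gt h3q), div_le_iff₀ h3q]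
          nlinarith [hDA, hBq, dist_nonneg (x := g t) (y := β u')]
        · have := hβcu.2
          nlinarith [tri3, htc]
      · -- both on β
        push_neg at htd
        have hGt : G t = β (c - (t - d)) := by
          simp only [hG, if_neg (not_le.mpr htd)]
        have hGu : G u = β (c - (u - d)) := by
          simp only [hG, if_neg (not_le.mpr hud)]
        have ht'mem : c - (t - d) ∈ Set.Icc a b := ⟨by linarith, by linarith [hc.2]⟩
        have hu'mem : c - (u - d) ∈ Set.Icc a b := ⟨by linarith, by linarith [hc.2]⟩
        have hβtu := hβ ht'mem hu'mem
        have habs' : |c - (t - d) - (c - (u - d))| = u - t := by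
          have e : c - (t - d) - (c - (u - d)) = u - t := by ring
          rw [e, abs_of_nonneg (by linarith)]
        rw [habs'] at hβtu
        rw [hGt, hGu]
        constructor
        · have h1 : (u - t) / (3 * q) ≤ (u - t) / q := by
            apply div_le_div_of_nonneg_left (by linarith) hq0 (by linarith)
          linarith [hβtu.1]
        · nlinarith [hβtu.2, dist_nonneg (x := β (c - (t - d))) (y := β (c - (u - d)))]
  intro t u ht hu
  rcases le_total t u with h | h
  · exact key ht hu h
  · rw [dist_comm, abs_sub_comm]
    exact key hu ht h
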